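/- For any directed graph G with m edges and any target node t, Σ_{v ∈ V} π(v,t)·d_in(v) ≤ (m · n·π(t) · n·π(t)/(1-α))^{1/2} = n·π(t)·(m/(1-α))^{1/2}. -/

import Mathlib

open Finset

variable {V : Type*}

/-- Out-neighbors of `v` in the directed graph with edge relation `E`. -/
def outNbrs [Fintype V] (E : V → V → Prop) [DecidableRel E] (v : V) : Finset V :=
  Finset.univ.filter fun w => E v w

/-- In-neighbors of `v`. -/
def inNbrs [Fintype V] (E : V → V → Prop) [DecidableRel E] (v : V) : Finset V :=
  Finset.univ.filter fun u => E u v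

/-- Out-degree. -/
def doutd [Fintype V] (E : V → V → Prop) [DecidableRel E] (v : V) : ℕ := (outNbrs E v).card

/-- In-degree. -/
def dind [Fintype V] (E : V → V → Prop) [DecidableRel E] (v : V) : ℕ := (inNbrs E v).card

/-- Random-walk transition matrix: from `u`, move to a uniformly random out-neighbor. -/
noncomputable def transMat [Fintype V] (E : V → V → Prop) [DecidableRel E] : Matrix V V ℝ :=
  Matrix.of fun u v => if E u v then (1 : ℝ) / doutd E u else 0

/-- Personalized PageRank `π(u,t)`: probability that an `α`-discounted random walk
(length `ℓ` with probability `α(1-α)^ℓ`) started at `u` terminates at `t`. -/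
noncomputable def ppr [Fintype V] [DecidableEq V] (α : ℝ) (E : V → V → Prop) [DecidableRel E]
    (u t : V) : ℝ :=
  ∑' ℓ : ℕ, α * (1 - α) ^ ℓ * (transMat E ^ ℓ) u t

/-- PageRank `π(t)`: probability that an `α`-discounted random walk started at a uniformly
random node terminates at `t`. -/
noncomputable def pgrk [Fintype V] [DecidableEq V] (α : ℝ) (E : V → V → Prop) [DecidableRel E]
    (t : V) : ℝ :=
  (1 / (Fintype.card V : ℝ)) * ∑ u : V, ppr α E u t

section Aux
variable [Fintype V] [DecidableEq V] (E : V → V → Prop) [DecidableRel E]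

lemma transMat_nonneg (u v : V) : 0 ≤ transMat E u v := by
  unfold transMat
  simp only [Matrix.of_apply]
  split <;> positivity

lemma transMat_pow_nonneg (ℓ : ℕ) (u v : V) : 0 ≤ (transMat E ^ ℓ) u v := by
  induction ℓ generalizing u v with
  | zero => simp [Matrix.one_apply]; split <;> norm_num
  | succ n ih =>
    rw [pow_succ', Matrix.mul_apply]
    exact sum_nonneg fun w _ => mul_nonneg (transMat_nonneg E u w) (ih w v)

lemma transMat_row_sum (hpos : ∀ v : V, 0 < doutd E v) (u : V) :
    ∑ v : V, transMat E u v = 1 := by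
  have hd : (doutd E u : ℝ) ≠ 0 := Nat.cast_ne_zero.2 (hpos u).ne'
  simp only [transMat, Matrix.of_apply, Finset.sum_ite_eq']
  rw [Finset.sum_ite, Finset.sum_const, Finset.sum_const_zero, add_zero]
  have : (Finset.univ.filter fun v => E u v).card = doutd E u := rfl
  rw [this]
  rw [nsmul_eq_mul]; field_simp

lemma transMat_pow_row_sum (hpos : ∀ v : V, 0 < doutd E v) (ℓ : ℕ) (u : V) :
    ∑ v : V, (transMat E ^ ℓ) u v = 1 := by
  induction ℓ generalizing u with
  | zero => simp [Matrix.one_apply]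
  | succ n ih =>
    simp only [pow_succ', Matrix.mul_apply]
    rw [Finset.sum_comm]
    calc ∑ w : V, ∑ v : V, transMat E u w * (transMat E ^ n) w v
        = ∑ w : V, transMat E u w * ∑ v : V, (transMat E ^ n) w v := by
          simp [Finset.mul_sum]
      _ = 1 := by simp only [ih, mul_one]; exact transMat_row_sum E hpos u

lemma transMat_pow_le_one (hpos : ∀ v : V, 0 < doutd E v) (ℓ : ℕ) (u v : V) :
    (transMat E ^ ℓ) u v ≤ 1 := by
  rw [← transMat_pow_row_sum E hpos ℓ u]
  exact Finset.single_le_sum (fun w _ => transMat_pow_nonneg E ℓ u w) (mem_univ v)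

lemma ppr_summable {α : ℝ} (hα : α ∈ Set.Ioo (0:ℝ) 1) (hpos : ∀ v : V, 0 < doutd E v)
    (u t : V) : Summable fun ℓ : ℕ => α * (1 - α) ^ ℓ * (transMat E ^ ℓ) u t := by
  obtain ⟨h0, h1⟩ := hα
  have hgeo : Summable fun ℓ : ℕ => α * (1 - α) ^ ℓ :=
    (summable_geometric_of_lt_one (by linarith) (by linarith)).mul_left α
  refine hgeo.of_nonneg_of_le (fun ℓ => ?_) (fun ℓ => ?_)
  · exact mul_nonneg (mul_nonneg h0.le (pow_nonneg (by linarith) _)) (transMat_pow_nonneg E ℓ u t)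
  · have := transMat_pow_le_one E hpos ℓ u t
    have h2 : 0 ≤ α * (1 - α) ^ ℓ := mul_nonneg h0.le (pow_nonneg (by linarith) _)
    calc α * (1 - α) ^ ℓ * (transMat E ^ ℓ) u t ≤ α * (1 - α) ^ ℓ * 1 :=
          mul_le_mul_of_nonneg_left this h2
      _ = α * (1 - α) ^ ℓ := mul_one _

lemma ppr_nonneg {α : ℝ} (hα : α ∈ Set.Ioo (0:ℝ) 1) (u t : V) : 0 ≤ ppr α E u t :=
  tsum_nonneg fun ℓ => mul_nonneg (mul_nonneg hα.1.le (pow_nonneg (by linarith [hα.2]) _))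
    (transMat_pow_nonneg E ℓ u t)

lemma ppr_rec {α : ℝ} (hα : α ∈ Set.Ioo (0:ℝ) 1) (hpos : ∀ v : V, 0 < doutd E v) (u t : V) :
    ppr α E u t = α * (if u = t then 1 else 0)
      + (1 - α) * ∑ v : V, transMat E u v * ppr α E v t := by
  have hsum := ppr_summable E hα hpos u t
  rw [ppr, hsum.tsum_eq_zero_add]
  congr 1
  · simp [Matrix.one_apply]
  · have heq : ∀ ℓ : ℕ, α * (1 - α) ^ (ℓ + 1) * (transMat E ^ (ℓ + 1)) u t
        = ∑ v : V, (1 - α) * (transMat E u v * (α * (1 - α) ^ ℓ * (transMat E ^ ℓ) v t)) := by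
      intro ℓ
      have hp : (transMat E ^ (ℓ + 1)) u t = ∑ v : V, transMat E u v * (transMat E ^ ℓ) v t := by
        rw [pow_succ', Matrix.mul_apply]
      rw [hp, Finset.mul_sum]
      apply Finset.sum_congr rfl
      intro v _
      ring
    calc (∑' ℓ : ℕ, α * (1 - α) ^ (ℓ + 1) * (transMat E ^ (ℓ + 1)) u t)
        = ∑' ℓ : ℕ, ∑ v : V, (1 - α) * (transMat E u v * (α * (1 - α) ^ ℓ * (transMat E ^ ℓ) v t)) := by
          exact tsum_congr heq
      _ = ∑ v : V, ∑' ℓ : ℕ, (1 - α) * (transMat E u v * (α * (1 - α) ^ ℓ * (transMat E ^ ℓ) v t)) := by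
          exact Summable.tsum_finsetSum fun v _ => ((ppr_summable E hα hpos v t).mul_left _).mul_left _
      _ = (1 - α) * ∑ v : V, transMat E u v * ppr α E v t := by
          rw [Finset.mul_sum]
          apply Finset.sum_congr rfl
          intro v _
          rw [tsum_mul_left, tsum_mul_left]
          rfl
end Aux

/-- For any directed graph with `m` edges and any target `t`,
`Σ_v π(v,t)·d_in(v) ≤ (m · nπ(t) · nπ(t)/(1-α))^{1/2} = nπ(t)·(m/(1-α))^{1/2}`. -/
theorem sum_ppr_indeg_le [Fintype V] [DecidableEq V] (E : V → V → Prop) [DecidableRel E]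
    (α : ℝ) (hα : α ∈ Set.Ioo (0 : ℝ) 1) (hpos : ∀ v : V, 0 < doutd E v) (t : V)
    (m : ℕ) (hm : m = ∑ v : V, doutd E v) :
    (∑ v : V, ppr α E v t * (dind E v : ℝ)) ≤
        Real.sqrt ((m : ℝ) * ((Fintype.card V : ℝ) * pgrk α E t) *
          ((Fintype.card V : ℝ) * pgrk α E t) / (1 - α)) ∧
      Real.sqrt ((m : ℝ) * ((Fintype.card V : ℝ) * pgrk α E t) *
          ((Fintype.card V : ℝ) * pgrk α E t) / (1 - α)) =
        (Fintype.card V : ℝ) * pgrk α E t * Real.sqrt ((m : ℝ) / (1 - α)) := by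
  obtain ⟨h0, h1⟩ := hα
  have h1α : (0:ℝ) < 1 - α := by linarith
  set S := ∑ u : V, ppr α E u t with hS
  have hSnn : 0 ≤ S := Finset.sum_nonneg fun u _ => ppr_nonneg E ⟨h0, h1⟩ u t
  have hcard : (Fintype.card V : ℝ) * pgrk α E t = S := by
    rw [pgrk]
    by_cases h : (Fintype.card V : ℝ) = 0
    · have : IsEmpty V := Fintype.card_eq_zero_iff.mp (by exact_mod_cast h)
      simp [hS]
    · field_simp; rfl
  rw [hcard]
  set s := (Finset.univ ×ˢ Finset.univ).filter (fun p : V × V => E p.1 p.2) with hs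
  have hkey : ∀ f : V → V → ℝ,
      ∑ p ∈ s, f p.1 p.2 = ∑ u : V, ∑ v : V, if E u v then f u v else 0 := by
    intro f
    rw [hs, Finset.sum_filter, Finset.sum_product]
  have hA : (∑ v : V, ppr α E v t * (dind E v : ℝ)) = ∑ p ∈ s, ppr α E p.2 t := by
    rw [hkey (fun u v => ppr α E v t), Finset.sum_comm]
    apply Finset.sum_congr rfl
    intro v _
    symm
    rw [← Finset.sum_filter, Finset.sum_const, nsmul_eq_mul, mul_comm]
    rfl
  have hf : ∀ p : V × V, (0:ℝ) ≤ ppr α E p.2 t / (doutd E p.1 : ℝ) :=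
    fun p => div_nonneg (ppr_nonneg E ⟨h0, h1⟩ _ _) (Nat.cast_nonneg _)
  have hg : ∀ p : V × V, (0:ℝ) ≤ ppr α E p.2 t * (doutd E p.1 : ℝ) :=
    fun p => mul_nonneg (ppr_nonneg E ⟨h0, h1⟩ _ _) (Nat.cast_nonneg _)
  have hterm : ∀ p ∈ s, Real.sqrt (ppr α E p.2 t / (doutd E p.1 : ℝ))
      * Real.sqrt (ppr α E p.2 t * (doutd E p.1 : ℝ)) = ppr α E p.2 t := by
    intro p _
    rw [← Real.sqrt_mul (hf p)]
    have hd : (doutd E p.1 : ℝ) ≠ 0 := Nat.cast_ne_zero.2 (hpos p.1).ne'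
    have hx : ppr α E p.2 t / (doutd E p.1 : ℝ) * (ppr α E p.2 t * (doutd E p.1 : ℝ))
        = (ppr α E p.2 t) ^ 2 := by field_simp
    rw [hx, Real.sqrt_sq (ppr_nonneg E ⟨h0, h1⟩ _ _)]
  have hfsum : ∑ p ∈ s, ppr α E p.2 t / (doutd E p.1 : ℝ) ≤ S / (1 - α) := by
    rw [hkey (fun u v => ppr α E v t / (doutd E u : ℝ)), hS, Finset.sum_div]
    apply Finset.sum_le_sum
    intro u _
    have hrec := ppr_rec E ⟨h0, h1⟩ hpos u t
    have hmat : ∑ v : V, transMat E u v * ppr α E v t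
        = ∑ v : V, if E u v then ppr α E v t / (doutd E u : ℝ) else 0 := by
      apply Finset.sum_congr rfl
      intro v _
      simp only [transMat, Matrix.of_apply, ite_mul, zero_mul, one_div_mul_eq_div]
    have hitenn : 0 ≤ α * (if u = t then (1:ℝ) else 0) := by
      split <;> simp [h0.le]
    rw [← hmat, le_div_iff₀ h1α]
    nlinarith [mul_comm (∑ v : V, transMat E u v * ppr α E v t) (1 - α)]
  have hgsum : ∑ p ∈ s, ppr α E p.2 t * (doutd E p.1 : ℝ) ≤ (m:ℝ) * S := by
    rw [hkey (fun u v => ppr α E v t * (doutd E u : ℝ)), Finset.sum_comm]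
    have hmcast : (m:ℝ) = ∑ u : V, (doutd E u : ℝ) := by rw [hm]; push_cast; rfl
    calc ∑ v : V, ∑ u : V, (if E u v then ppr α E v t * (doutd E u : ℝ) else 0)
        = ∑ v : V, ppr α E v t * ∑ u ∈ inNbrs E v, (doutd E u : ℝ) := by
          apply Finset.sum_congr rfl
          intro v _
          rw [Finset.mul_sum, ← Finset.sum_filter]
          rfl
      _ ≤ ∑ v : V, ppr α E v t * (m:ℝ) := by
          apply Finset.sum_le_sum
          intro v _
          apply mul_le_mul_of_nonneg_left _ (ppr_nonneg E ⟨h0, h1⟩ _ _)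
          rw [hmcast]
          exact Finset.sum_le_sum_of_subset_of_nonneg (Finset.subset_univ _)
            (fun i _ _ => Nat.cast_nonneg _)
      _ = (m:ℝ) * S := by rw [← Finset.sum_mul, mul_comm]
  constructor
  · rw [hA, ← Finset.sum_congr rfl hterm]
    calc ∑ p ∈ s, Real.sqrt (ppr α E p.2 t / (doutd E p.1 : ℝ))
          * Real.sqrt (ppr α E p.2 t * (doutd E p.1 : ℝ))
        ≤ Real.sqrt (∑ p ∈ s, ppr α E p.2 t / (doutd E p.1 : ℝ))
          * Real.sqrt (∑ p ∈ s, ppr α E p.2 t * (doutd E p.1 : ℝ)) :=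
          Real.sum_sqrt_mul_sqrt_le s hf hg
      _ ≤ Real.sqrt (S / (1 - α)) * Real.sqrt ((m:ℝ) * S) :=
          mul_le_mul (Real.sqrt_le_sqrt hfsum) (Real.sqrt_le_sqrt hgsum)
            (Real.sqrt_nonneg _) (Real.sqrt_nonneg _)
      _ = Real.sqrt ((m:ℝ) * S * S / (1 - α)) := by
          rw [← Real.sqrt_mul (div_nonneg hSnn h1α.le)]
          congr 1
          ring
  · have hx : (m:ℝ) * S * S / (1 - α) = S ^ 2 * ((m:ℝ) / (1 - α)) := by ring
    rw [hx, Real.sqrt_mul (sq_nonneg S), Real.sqrt_sq hSnn]
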